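/- arXiv:2006.07242 — 2 statements merged into one kernel-verified Lean document; each statement's English description precedes it below -/
import Mathlib

section
/- (Domain adaptation bound, Ben-David et al., as restated in Theorem 3 of the paper.) Let X be a measurable space, let H be a nonempty class of measurable hypotheses h : X → {0,1}, and let D_S and D_T be probability measures on X × {0,1}. Then for every h ∈ H, L_{D_T}(h) ≤ L_{D_S}(h) + (1/2) d_{H∆H}(D_S, D_T) + λ, where λ := inf_{h'∈H} ( L_{D_S}(h') + L_{D_T}(h') ). -/
open MeasureTheory

/-- Embed a `{0,1}`-valued hypothesis `h : X → Bool` as a real-valued predictor. -/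
noncomputable def toRealFn {X : Type*} (h : X → Bool) : X → ℝ :=
  fun x => if h x then (1 : ℝ) else 0

/-- The risk of a real-valued predictor `f : X → ℝ`
under a probability measure `D` on `X × Bool` (labels in `{0,1}`):
`L_D(f) = E_{(x,y) ∼ D} [ |f x − y| ]`. -/
noncomputable def risk {X : Type*} [MeasurableSpace X]
    (D : Measure (X × Bool)) (f : X → ℝ) : ℝ :=
  ∫ p, |f p.1 - (if p.2 then (1 : ℝ) else 0)| ∂D

/-- The `H∆H`-divergence between two measures `D, D'` on `X × Bool`:
`d_{H∆H}(D, D') = 2 sup_{h, h' ∈ H} | Pr_{x ∼ D_X}[h x ≠ h' x] − Pr_{x ∼ D'_X}[h x ≠ h' x] |`,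
where `D_X, D'_X` are the marginals on `X`. -/
noncomputable def dHdH {X : Type*} [MeasurableSpace X] (H : Set (X → Bool))
    (D D' : Measure (X × Bool)) : ℝ :=
  2 * ⨆ (h : H) (h' : H),
    |((D.map Prod.fst) {x | (h : X → Bool) x ≠ (h' : X → Bool) x}).toReal -
      ((D'.map Prod.fst) {x | (h : X → Bool) x ≠ (h' : X → Bool) x}).toReal|

open MeasureTheory

lemma risk_eq {X : Type*} [MeasurableSpace X] (D : Measure (X × Bool))
    (h : X → Bool) (hm : Measurable h) :
    risk D (toRealFn h) = (D {p : X × Bool | h p.1 ≠ p.2}).toReal := by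
  have hset : MeasurableSet {p : X × Bool | h p.1 ≠ p.2} := by
    have : MeasurableSet {p : X × Bool | h p.1 = p.2} :=
      measurableSet_eq_fun (hm.comp measurable_fst) measurable_snd
    have h2 : {p : X × Bool | h p.1 ≠ p.2} = {p : X × Bool | h p.1 = p.2}ᶜ := rfl
    rw [h2]; exact this.compl
  rw [risk, ← measureReal_def, ← MeasureTheory.integral_indicator_one hset]
  congr 1; funext p
  by_cases h1 : h p.1 <;> by_cases h2 : p.2 <;>
    simp [toRealFn, h1, h2, Set.indicator_apply]

lemma toReal_subadd {Y : Type*} [MeasurableSpace Y] (μ : Measure Y)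
    [IsProbabilityMeasure μ] {A B C : Set Y} (hsub : A ⊆ B ∪ C) :
    (μ A).toReal ≤ (μ B).toReal + (μ C).toReal := by
  have h1 : μ A ≤ μ B + μ C := (measure_mono hsub).trans (measure_union_le _ _)
  have h2 := ENNReal.toReal_mono
    (by simp [ENNReal.add_ne_top, measure_ne_top]) h1
  rwa [ENNReal.toReal_add (measure_ne_top _ _) (measure_ne_top _ _)] at h2

/-- domain adaptation bound, Ben-David et al.:
`L_{D_T}(h) ≤ L_{D_S}(h) + (1/2) d_{H∆H}(D_S, D_T) + λ` where
`λ = inf_{h' ∈ H} (L_{D_S}(h') + L_{D_T}(h'))`. -/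
theorem domain_adaptation_bound {X : Type*} [MeasurableSpace X]
    (H : Set (X → Bool)) (hne : H.Nonempty) (hHmeas : ∀ h ∈ H, Measurable h)
    (DS DT : Measure (X × Bool)) [IsProbabilityMeasure DS] [IsProbabilityMeasure DT]
    (h : X → Bool) (hmem : h ∈ H) :
    risk DT (toRealFn h) ≤
      risk DS (toRealFn h) + (1 / 2 : ℝ) * dHdH H DS DT +
        ⨅ h' : H, (risk DS (toRealFn (h' : X → Bool)) + risk DT (toRealFn (h' : X → Bool))) := by
  haveI : Nonempty H := ⟨⟨h, hmem⟩⟩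
  set F : H → H → ℝ := fun g g' =>
    |((DS.map Prod.fst) {x | (g : X → Bool) x ≠ (g' : X → Bool) x}).toReal -
      ((DT.map Prod.fst) {x | (g : X → Bool) x ≠ (g' : X → Bool) x}).toReal| with hF
  have hF1 : ∀ g g', F g g' ≤ 1 := by
    intro g g'
    have h1 : ((DS.map Prod.fst) {x | (g : X → Bool) x ≠ (g' : X → Bool) x}).toReal ≤ 1 := by
      haveI : IsProbabilityMeasure (DS.map Prod.fst) :=
        Measure.isProbabilityMeasure_map measurable_fst.aemeasurable
      exact ENNReal.toReal_le_of_le_ofReal one_pos.le (by simpa using prob_le_one)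
    have h2 : ((DT.map Prod.fst) {x | (g : X → Bool) x ≠ (g' : X → Bool) x}).toReal ≤ 1 := by
      haveI : IsProbabilityMeasure (DT.map Prod.fst) :=
        Measure.isProbabilityMeasure_map measurable_fst.aemeasurable
      exact ENNReal.toReal_le_of_le_ofReal one_pos.le (by simpa using prob_le_one)
    rw [abs_sub_le_iff]
    constructor <;> [linarith [ENNReal.toReal_nonneg
        (a := (DT.map Prod.fst) {x | (g : X → Bool) x ≠ (g' : X → Bool) x})];
      linarith [ENNReal.toReal_nonneg
        (a := (DS.map Prod.fst) {x | (g : X → Bool) x ≠ (g' : X → Bool) x})]]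
  set S : ℝ := ⨆ (g : H) (g' : H), F g g' with hS
  have hFS : ∀ g g' : H, F g g' ≤ S := by
    intro g g'
    have hb : BddAbove (Set.range fun g' => F g g') := ⟨1, by rintro _ ⟨g', rfl⟩; exact hF1 g g'⟩
    have h1 : F g g' ≤ ⨆ g', F g g' := le_ciSup hb g'
    have hb2 : BddAbove (Set.range fun g => ⨆ g', F g g') :=
      ⟨1, by rintro _ ⟨g, rfl⟩; exact ciSup_le fun g' => hF1 g g'⟩
    exact h1.trans (le_ciSup hb2 g)
  have hdHdH : (1 / 2 : ℝ) * dHdH H DS DT = S := by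
    rw [dHdH]; ring
  have key : ∀ g' : H,
      risk DT (toRealFn h) ≤ risk DS (toRealFn h) + S +
        (risk DS (toRealFn (g' : X → Bool)) + risk DT (toRealFn (g' : X → Bool))) := by
    intro g'
    have hmg' : Measurable (g' : X → Bool) := hHmeas _ g'.2
    have hmh : Measurable h := hHmeas _ hmem
    have hmsetX : MeasurableSet {x | h x ≠ (g' : X → Bool) x} := by
      have : MeasurableSet {x | h x = (g' : X → Bool) x} :=
        measurableSet_eq_fun hmh hmg'
      have h2 : {x | h x ≠ (g' : X → Bool) x} = {x | h x = (g' : X → Bool) x}ᶜ := rfl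
      rw [h2]; exact this.compl
    have hmapS : (DS.map Prod.fst) {x | h x ≠ (g' : X → Bool) x}
        = DS {p : X × Bool | h p.1 ≠ (g' : X → Bool) p.1} :=
      Measure.map_apply measurable_fst hmsetX
    have hmapT : (DT.map Prod.fst) {x | h x ≠ (g' : X → Bool) x}
        = DT {p : X × Bool | h p.1 ≠ (g' : X → Bool) p.1} :=
      Measure.map_apply measurable_fst hmsetX
    -- abbreviations
    set aT := (DT {p : X × Bool | h p.1 ≠ p.2}).toReal
    set bT := (DT {p : X × Bool | (g' : X → Bool) p.1 ≠ p.2}).toReal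
    set cT := (DT {p : X × Bool | h p.1 ≠ (g' : X → Bool) p.1}).toReal
    set aS := (DS {p : X × Bool | h p.1 ≠ p.2}).toReal
    set bS := (DS {p : X × Bool | (g' : X → Bool) p.1 ≠ p.2}).toReal
    set cS := (DS {p : X × Bool | h p.1 ≠ (g' : X → Bool) p.1}).toReal
    have hsub1 : {p : X × Bool | h p.1 ≠ p.2} ⊆
        {p : X × Bool | (g' : X → Bool) p.1 ≠ p.2} ∪ {p : X × Bool | h p.1 ≠ (g' : X → Bool) p.1} := by
      intro p hp
      by_cases hg : (g' : X → Bool) p.1 = p.2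
      · right; simp only [Set.mem_setOf_eq] at hp ⊢; rw [hg]; exact hp
      · left; exact hg
    have hsub2 : {p : X × Bool | h p.1 ≠ (g' : X → Bool) p.1} ⊆
        {p : X × Bool | h p.1 ≠ p.2} ∪ {p : X × Bool | (g' : X → Bool) p.1 ≠ p.2} := by
      intro p hp
      by_cases ha : h p.1 = p.2
      · right; simp only [Set.mem_setOf_eq] at hp ⊢; rw [← ha]; exact fun e => hp e.symm
      · left; exact ha
    have h1 : aT ≤ bT + cT := toReal_subadd DT hsub1
    have h2 : cS ≤ aS + bS := toReal_subadd DS hsub2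
    have h3 : cT ≤ cS + S := by
      have := hFS ⟨h, hmem⟩ g'
      rw [hF] at this
      simp only at this
      rw [hmapS, hmapT] at this
      have habs : cT - cS ≤ |cS - cT| := by rw [abs_sub_comm]; exact le_abs_self _
      linarith
    rw [risk_eq DT h hmh, risk_eq DS h hmh, risk_eq DT _ hmg', risk_eq DS _ hmg']
    linarith
  rw [hdHdH]
  have : risk DT (toRealFn h) - risk DS (toRealFn h) - S ≤
      ⨅ h' : H, (risk DS (toRealFn (h' : X → Bool)) + risk DT (toRealFn (h' : X → Bool))) := by
    apply le_ciInf
    intro g'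
    linarith [key g']
  linarith
end

section
/- (Deterministic core of Theorem 1/Theorem 2 of the paper.) Let X be a measurable space, let H be a nonempty class of measurable hypotheses h : X → {0,1}, let D, D_1, …, D_K be probability measures on X × {0,1}, and let h_1, …, h_K ∈ H be arbitrary. Then the risk under D of the ensemble of h_1, …, h_K satisfies L_D((1/K) Σ_{k=1}^K h_k) ≤ (1/K) Σ_{k=1}^K [ L_{D_k}(h_k) + (1/2) d_{H∆H}(D_k, D) + λ_k ], where λ_k := inf_{h∈H} ( L_D(h) + L_{D_k}(h) ). -/
open MeasureTheory

section aux
set_option linter.unusedSectionVars false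
variable {X : Type*} [MeasurableSpace X]

lemma toRealFn_meas {h : X → Bool} (hm : Measurable h) : Measurable (toRealFn h) := by
  have e : toRealFn h = (fun b : Bool => if b then (1:ℝ) else 0) ∘ h := rfl
  rw [e]; exact Measurable.of_discrete.comp hm

lemma toRealFn_abs_le (h : X → Bool) (x : X) : |toRealFn h x| ≤ 1 := by
  unfold toRealFn; split <;> simp

lemma ne_set_meas {f g : X → Bool} (hf : Measurable f) (hg : Measurable g) :
    MeasurableSet {x | f x ≠ g x} := by
  have h1 : {x | f x ≠ g x} = (fun x => (f x, g x)) ⁻¹' {p : Bool × Bool | p.1 ≠ p.2} := rfl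
  rw [h1]
  exact (hf.prodMk hg) (MeasurableSet.of_discrete)

lemma integrable_bdd {Y : Type*} [MeasurableSpace Y] (D : Measure Y) [IsFiniteMeasure D]
    (f : Y → ℝ) (hf : Measurable f) (C : ℝ) (hb : ∀ y, |f y| ≤ C) : Integrable f D := by
  refine Integrable.mono' (integrable_const C) hf.aestronglyMeasurable ?_
  filter_upwards with y using hb y

-- the risk integrand
lemma riskInt_meas {f : X → ℝ} (hf : Measurable f) :
    Measurable (fun p : X × Bool => |f p.1 - (if p.2 then (1:ℝ) else 0)|) := by
  apply Measurable.abs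
  have e : (fun p : X × Bool => if p.2 then (1:ℝ) else 0)
      = (fun b : Bool => if b then (1:ℝ) else 0) ∘ Prod.snd := rfl
  exact (hf.comp measurable_fst).sub (e ▸ Measurable.of_discrete.comp measurable_snd)

lemma riskInt_integrable (D : Measure (X × Bool)) [IsFiniteMeasure D]
    {h : X → Bool} (hm : Measurable h) :
    Integrable (fun p : X × Bool => |toRealFn h p.1 - (if p.2 then (1:ℝ) else 0)|) D := by
  refine integrable_bdd D _ (riskInt_meas (toRealFn_meas hm)) 2 ?_
  intro p
  rw [abs_abs]
  have := toRealFn_abs_le h p.1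
  have h2 : |(if p.2 then (1:ℝ) else 0)| ≤ 1 := by split <;> simp
  calc |toRealFn h p.1 - (if p.2 then (1:ℝ) else 0)| ≤ _ := abs_sub _ _
    _ ≤ 2 := by linarith

-- pointwise: |toRealFn f x - toRealFn g x| = indicator of disagreement set
lemma abs_toRealFn_sub (f g : X → Bool) (x : X) :
    |toRealFn f x - toRealFn g x| = Set.indicator {x | f x ≠ g x} (fun _ => (1:ℝ)) x := by
  unfold toRealFn
  by_cases h1 : f x <;> by_cases h2 : g x <;> simp [Set.indicator, h1, h2]

-- L2: disagreement integral equals measure of disagreement set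
lemma disag_integral (D : Measure (X × Bool)) [IsProbabilityMeasure D]
    {f g : X → Bool} (hf : Measurable f) (hg : Measurable g) :
    ∫ p : X × Bool, |toRealFn f p.1 - toRealFn g p.1| ∂D
      = ((D.map Prod.fst) {x | f x ≠ g x}).toReal := by
  have hS := ne_set_meas hf hg
  have h1 : ∀ p : X × Bool, |toRealFn f p.1 - toRealFn g p.1|
      = Set.indicator {x | f x ≠ g x} (fun _ => (1:ℝ)) p.1 := fun p => abs_toRealFn_sub f g p.1
  simp_rw [h1]
  rw [← integral_map measurable_fst.aemeasurable
    ((measurable_const.indicator hS).aestronglyMeasurable)]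
  rw [integral_indicator_const (1:ℝ) hS]
  simp [mul_comm]
  rfl

-- L1: triangle inequality for risks
lemma risk_triangle (D : Measure (X × Bool)) [IsProbabilityMeasure D]
    {f g : X → Bool} (hf : Measurable f) (hg : Measurable g) :
    risk D (toRealFn f) ≤ risk D (toRealFn g)
      + ∫ p : X × Bool, |toRealFn f p.1 - toRealFn g p.1| ∂D := by
  unfold risk
  rw [← integral_add (riskInt_integrable D hg)]
  · apply integral_mono (riskInt_integrable D hf)
    · apply Integrable.add (riskInt_integrable D hg)
      refine integrable_bdd D _ ?_ 2 ?_
      · exact ((toRealFn_meas hf).comp measurable_fst).sub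
          ((toRealFn_meas hg).comp measurable_fst) |>.abs
      · intro p; rw [abs_abs]
        have := toRealFn_abs_le f p.1; have := toRealFn_abs_le g p.1
        calc |toRealFn f p.1 - toRealFn g p.1| ≤ _ := abs_sub _ _
          _ ≤ 2 := by linarith
    · intro p
      dsimp only
      have : toRealFn f p.1 - (if p.2 then (1:ℝ) else 0)
          = (toRealFn g p.1 - (if p.2 then (1:ℝ) else 0)) + (toRealFn f p.1 - toRealFn g p.1) := by ring
      rw [this]
      exact abs_add_le _ _
  · refine integrable_bdd D _ ?_ 2 ?_
    · exact ((toRealFn_meas hf).comp measurable_fst).sub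
        ((toRealFn_meas hg).comp measurable_fst) |>.abs
    · intro p; rw [abs_abs]
      have := toRealFn_abs_le f p.1; have := toRealFn_abs_le g p.1
      calc |toRealFn f p.1 - toRealFn g p.1| ≤ _ := abs_sub _ _
        _ ≤ 2 := by linarith

-- L3: disagreement ≤ sum of risks
lemma disag_le_risks (D : Measure (X × Bool)) [IsProbabilityMeasure D]
    {f g : X → Bool} (hf : Measurable f) (hg : Measurable g) :
    ∫ p : X × Bool, |toRealFn f p.1 - toRealFn g p.1| ∂D
      ≤ risk D (toRealFn f) + risk D (toRealFn g) := by
  unfold risk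
  rw [← integral_add (riskInt_integrable D hf) (riskInt_integrable D hg)]
  apply integral_mono
  · refine integrable_bdd D _ ?_ 2 ?_
    · exact ((toRealFn_meas hf).comp measurable_fst).sub
        ((toRealFn_meas hg).comp measurable_fst) |>.abs
    · intro p; rw [abs_abs]
      have := toRealFn_abs_le f p.1; have := toRealFn_abs_le g p.1
      calc |toRealFn f p.1 - toRealFn g p.1| ≤ _ := abs_sub _ _
        _ ≤ 2 := by linarith
  · exact (riskInt_integrable D hf).add (riskInt_integrable D hg)
  · intro p
    dsimp only
    have : toRealFn f p.1 - toRealFn g p.1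
        = (toRealFn f p.1 - (if p.2 then (1:ℝ) else 0)) - (toRealFn g p.1 - (if p.2 then (1:ℝ) else 0)) := by ring
    rw [this]
    exact abs_sub _ _
end aux

section main
variable {X : Type*} [MeasurableSpace X]

lemma toReal_map_le_one (D : Measure (X × Bool)) [IsProbabilityMeasure D] (S : Set X) :
    ((D.map Prod.fst) S).toReal ≤ 1 := by
  have : IsProbabilityMeasure (D.map Prod.fst) :=
    Measure.isProbabilityMeasure_map measurable_fst.aemeasurable
  exact ENNReal.toReal_le_of_le_ofReal zero_le_one (by simpa using prob_le_one)

lemma le_half_dHdH (H : Set (X → Bool)) (hne : H.Nonempty)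
    (D D' : Measure (X × Bool)) [IsProbabilityMeasure D] [IsProbabilityMeasure D']
    {f g : X → Bool} (hf : f ∈ H) (hg : g ∈ H) :
    |((D.map Prod.fst) {x | f x ≠ g x}).toReal -
      ((D'.map Prod.fst) {x | f x ≠ g x}).toReal| ≤ (1/2 : ℝ) * dHdH H D D' := by
  have : Nonempty H := ⟨⟨hne.choose, hne.choose_spec⟩⟩
  set F : H → H → ℝ := fun h h' =>
    |((D.map Prod.fst) {x | (h : X → Bool) x ≠ (h' : X → Bool) x}).toReal -
      ((D'.map Prod.fst) {x | (h : X → Bool) x ≠ (h' : X → Bool) x}).toReal| with hF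
  have hFle : ∀ h h', F h h' ≤ 1 := by
    intro h h'
    have a1 := toReal_map_le_one D {x | (h : X → Bool) x ≠ (h' : X → Bool) x}
    have a2 := toReal_map_le_one D' {x | (h : X → Bool) x ≠ (h' : X → Bool) x}
    have a3 : (0:ℝ) ≤ ((D.map Prod.fst) {x | (h : X → Bool) x ≠ (h' : X → Bool) x}).toReal :=
      ENNReal.toReal_nonneg
    have a4 : (0:ℝ) ≤ ((D'.map Prod.fst) {x | (h : X → Bool) x ≠ (h' : X → Bool) x}).toReal :=
      ENNReal.toReal_nonneg
    rw [hF, abs_sub_le_iff]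
    constructor <;> linarith
  have key : F ⟨f, hf⟩ ⟨g, hg⟩ ≤ ⨆ (h : H) (h' : H), F h h' := by
    have hbdd1 : BddAbove (Set.range fun h' : H => F ⟨f, hf⟩ h') := by
      refine ⟨1, ?_⟩; rintro x ⟨h', rfl⟩; exact hFle _ _
    have h1 : F ⟨f, hf⟩ ⟨g, hg⟩ ≤ ⨆ h' : H, F ⟨f, hf⟩ h' :=
      le_ciSup hbdd1 ⟨g, hg⟩
    refine h1.trans (le_ciSup (f := fun h : H => ⨆ h' : H, F h h') ?_ ⟨f, hf⟩)
    refine ⟨1, ?_⟩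
    rintro x ⟨h, rfl⟩
    exact ciSup_le fun h' => hFle h h'
  have : dHdH H D D' = 2 * ⨆ (h : H) (h' : H), F h h' := rfl
  rw [this]
  linarith [key]
end main

/-- deterministic core of Theorem 1/2: the risk under `D` of the
ensemble of `h₁, …, h_K` is at most
`(1/K) ∑ₖ [ L_{Dₖ}(hₖ) + (1/2) d_{H∆H}(Dₖ, D) + λₖ ]`, where
`λₖ = inf_{h ∈ H} (L_D(h) + L_{Dₖ}(h))`. -/
theorem ensemble_domain_adaptation_bound {X : Type*} [MeasurableSpace X]
    (H : Set (X → Bool)) (hne : H.Nonempty) (hHmeas : ∀ h ∈ H, Measurable h)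
    (K : ℕ) (hK : 0 < K)
    (D : Measure (X × Bool)) [IsProbabilityMeasure D]
    (Dk : Fin K → Measure (X × Bool)) [∀ k, IsProbabilityMeasure (Dk k)]
    (hk : Fin K → (X → Bool)) (hkMem : ∀ k, hk k ∈ H) :
    risk D (fun x => (1 / K : ℝ) * ∑ k, (if hk k x then (1 : ℝ) else 0)) ≤
      (1 / K : ℝ) * ∑ k,
        (risk (Dk k) (toRealFn (hk k)) + (1 / 2 : ℝ) * dHdH H (Dk k) D +
          ⨅ h : H, (risk D (toRealFn (h : X → Bool)) + risk (Dk k) (toRealFn (h : X → Bool)))) := by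
  have hNe : Nonempty H := ⟨⟨hne.choose, hne.choose_spec⟩⟩
  have hkm : ∀ k, Measurable (hk k) := fun k => hHmeas _ (hkMem k)
  have hKpos : (0:ℝ) < K := by exact_mod_cast hK
  -- Step 1: convexity
  have step1 : risk D (fun x => (1 / K : ℝ) * ∑ k, (if hk k x then (1 : ℝ) else 0))
      ≤ (1 / K : ℝ) * ∑ k, risk D (toRealFn (hk k)) := by
    unfold risk
    rw [← integral_finset_sum _ (fun k _ => riskInt_integrable D (hkm k)),
      ← integral_const_mul]
    apply integral_mono
    · refine integrable_bdd D _ ?_ 2 ?_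
      · apply Measurable.abs
        refine Measurable.sub ?_ ?_
        · exact (measurable_const.mul (Finset.measurable_sum _ (fun k _ =>
            (toRealFn_meas (hkm k)).comp measurable_fst)) : Measurable fun p : X × Bool =>
              (1 / K : ℝ) * ∑ k, toRealFn (hk k) p.1)
        · have e : (fun p : X × Bool => if p.2 then (1:ℝ) else 0)
              = (fun b : Bool => if b then (1:ℝ) else 0) ∘ Prod.snd := rfl
          exact e ▸ Measurable.of_discrete.comp measurable_snd
      · intro p; rw [abs_abs]
        have h1 : |(1 / K : ℝ) * ∑ k, (if hk k p.1 then (1:ℝ) else 0)| ≤ 1 := by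
          rw [abs_mul, abs_of_nonneg (by positivity : (0:ℝ) ≤ 1/(K:ℝ))]
          have : |∑ k : Fin K, (if hk k p.1 then (1:ℝ) else 0)| ≤ K := by
            refine (Finset.abs_sum_le_sum_abs _ _).trans ?_
            calc ∑ k : Fin K, |(if hk k p.1 then (1:ℝ) else 0)|
                ≤ ∑ _k : Fin K, (1:ℝ) := Finset.sum_le_sum fun k _ => by split <;> simp
              _ = K := by simp
          calc (1/(K:ℝ)) * |∑ k : Fin K, (if hk k p.1 then (1:ℝ) else 0)|
              ≤ (1/(K:ℝ)) * K := by
                apply mul_le_mul_of_nonneg_left this (by positivity)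
            _ = 1 := by field_simp
        have h2 : |(if p.2 then (1:ℝ) else 0)| ≤ 1 := by split <;> simp
        calc |(1 / K : ℝ) * ∑ k, (if hk k p.1 then (1:ℝ) else 0) - (if p.2 then (1:ℝ) else 0)|
            ≤ _ := abs_sub _ _
          _ ≤ 2 := by linarith
    · exact (integrable_finset_sum _ (fun k _ => riskInt_integrable D (hkm k))).const_mul _
    · intro p
      dsimp only
      have key : (1 / K : ℝ) * ∑ k, (if hk k p.1 then (1:ℝ) else 0) - (if p.2 then (1:ℝ) else 0)
          = (1 / K : ℝ) * ∑ k, (toRealFn (hk k) p.1 - (if p.2 then (1:ℝ) else 0)) := by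
        rw [Finset.sum_sub_distrib, mul_sub]
        simp [toRealFn, Finset.card_univ]
        field_simp
      rw [key, abs_mul, abs_of_nonneg (by positivity : (0:ℝ) ≤ 1/(K:ℝ)), mul_le_mul_iff_right₀ (by positivity)]
      exact Finset.abs_sum_le_sum_abs _ _
  -- Step 2: per-k bound
  have step2 : ∀ k, risk D (toRealFn (hk k)) ≤
      risk (Dk k) (toRealFn (hk k)) + (1 / 2 : ℝ) * dHdH H (Dk k) D +
        ⨅ h : H, (risk D (toRealFn (h : X → Bool)) + risk (Dk k) (toRealFn (h : X → Bool))) := by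
    intro k
    rw [add_assoc, ← sub_le_iff_le_add']
    rw [← sub_le_iff_le_add']
    refine le_ciInf fun h => ?_
    have hm : Measurable (h : X → Bool) := hHmeas _ h.2
    have t1 := risk_triangle D (hkm k) hm
    have t2 := disag_integral D (hkm k) hm
    have t3 := disag_integral (Dk k) (hkm k) hm
    have t4 := disag_le_risks (Dk k) (hkm k) hm
    have t5 := le_half_dHdH H hne (Dk k) D (hkMem k) h.2
    have t5' := (abs_sub_le_iff.mp t5).2
    linarith
  calc risk D (fun x => (1 / K : ℝ) * ∑ k, (if hk k x then (1 : ℝ) else 0))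
      ≤ (1 / K : ℝ) * ∑ k, risk D (toRealFn (hk k)) := step1
    _ ≤ _ := by
        apply mul_le_mul_of_nonneg_left (Finset.sum_le_sum fun k _ => step2 k)
        positivity
end
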